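/- There exists a universal constant C′ > 0 with the following property: let (Ω, F, P) be a probability space with filtration (F_ℓ)_{ℓ≥0}, let δ′ ∈ (0,1), β ∈ (0,1], B̃ > 0, and let (Z_ℓ)_{ℓ≥1} be a sequence of random variables adapted to (F_ℓ) satisfying 0 ≤ Z_ℓ ≤ B̃ almost surely for all ℓ. Then with probability at least 1 − 2δ′, simultaneously for all natural numbers T ≥ 1, (1 − β)·Σ_{t=1}^T E[Z_t | F_{t−1}] − 2·B̃·C′·log(T/δ′)/β ≤ Σ_{ℓ=1}^T Z_ℓ ≤ (1 + β)·Σ_{t=1}^T E[Z_t | F_{t−1}] + 2·B̃·C′·log(T/δ′)/β. -/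

import Mathlib

open MeasureTheory ProbabilityTheory Real


private lemma exp_le_quad {x : ℝ} (h0 : 0 ≤ x) (h1 : x ≤ 1) :
    Real.exp x ≤ 1 + x + x ^ 2 := by
  have h := Real.exp_bound' h0 h1 (n := 3) (by norm_num)
  simp only [Finset.sum_range_succ, Finset.sum_range_zero, Nat.factorial] at h
  norm_num at h
  have h3 : x ^ 3 ≤ x ^ 2 := pow_le_pow_of_le_one h0 h1 (by norm_num)
  nlinarith [sq_nonneg x]

private lemma exp_neg_le_quad {x : ℝ} (h0 : 0 ≤ x) (h1 : x ≤ 1) :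
    Real.exp (-x) ≤ 1 - x + x ^ 2 := by
  have h2 : x + 1 ≤ Real.exp x := Real.add_one_le_exp x
  have h3 : 0 < Real.exp x := Real.exp_pos x
  rw [Real.exp_neg x, inv_le_iff_one_le_mul₀ h3]
  nlinarith

private lemma sum_inv_sq_le (n : ℕ) :
    ∑ i ∈ Finset.range n, (1 : ℝ) / ((i : ℝ) + 1) ^ 2 ≤ 2 - 2 / ((n : ℝ) + 1) := by
  induction n with
  | zero => norm_num
  | succ n ih =>
    rw [Finset.sum_range_succ]
    push_cast
    have h1 : (0:ℝ) < (n:ℝ) + 1 := by positivity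
    have h2 : (0:ℝ) < (n:ℝ) + 2 := by positivity
    have key : (1:ℝ) / ((n:ℝ) + 1) ^ 2 ≤ 2 / ((n:ℝ)+1) - 2 / ((n:ℝ)+2) := by
      rw [div_sub_div _ _ h1.ne' h2.ne', div_le_div_iff₀ (by positivity) (by positivity)]
      nlinarith
    have h4 : ((n:ℝ) + 1 + 1) = (n:ℝ) + 2 := by ring
    rw [h4]
    linarith


private lemma key_mgf
    {Ω : Type} [m0 : MeasurableSpace Ω] (P : Measure Ω) [IsProbabilityMeasure P]
    (𝓕 : Filtration ℕ m0) (B : ℝ) (hB : 0 < B)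
    (Z : ℕ → Ω → ℝ)
    (hadp : ∀ ℓ, StronglyMeasurable[𝓕 ℓ] (Z ℓ))
    (hint : ∀ ℓ, Integrable (Z ℓ) P)
    (hbdd : ∀ ℓ, ∀ᵐ ω ∂P, 0 ≤ Z ℓ ω ∧ Z ℓ ω ≤ B)
    (s : ℝ) (T : ℕ) :
    Integrable (fun ω => Real.exp (∑ t ∈ Finset.Icc 1 T,
        (s * Z t ω - (Real.exp (s * B) - 1) / B * (P[Z t | 𝓕 (t - 1)]) ω))) P ∧
    ∫ ω, Real.exp (∑ t ∈ Finset.Icc 1 T,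
        (s * Z t ω - (Real.exp (s * B) - 1) / B * (P[Z t | 𝓕 (t - 1)]) ω)) ∂P ≤ 1 := by
  set φ : ℝ := (Real.exp (s * B) - 1) / B with hφ
  set g : ℕ → Ω → ℝ := fun t => P[Z t | 𝓕 (t - 1)] with hgdef
  have hgm : ∀ t, StronglyMeasurable[𝓕 (t - 1)] (g t) := fun t => stronglyMeasurable_condExp
  have hgnn : ∀ t, ∀ᵐ ω ∂P, 0 ≤ g t ω := by
    intro t
    exact condExp_nonneg ((hbdd t).mono fun ω h => h.1)
  have hgB : ∀ t, ∀ᵐ ω ∂P, g t ω ≤ B := by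
    intro t
    have h1 : g t ≤ᵐ[P] P[(fun _ => B) | 𝓕 (t - 1)] :=
      condExp_mono (hint t) (integrable_const B) ((hbdd t).mono fun ω h => h.2)
    have h2 : P[(fun _ => B) | 𝓕 (t - 1)] = fun (_ : Ω) => B := condExp_const (𝓕.le _) B
    filter_upwards [h1] with ω hω
    simpa [h2] using hω
  have hWsm : ∀ T : ℕ, StronglyMeasurable
      (fun ω => Real.exp (∑ t ∈ Finset.Icc 1 T, (s * Z t ω - φ * g t ω))) := by
    intro T
    apply Continuous.comp_stronglyMeasurable Real.continuous_exp
    apply Finset.stronglyMeasurable_fun_sum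
    intro t _
    exact (stronglyMeasurable_const.mul ((hadp t).mono (𝓕.le t))).sub
      (stronglyMeasurable_const.mul ((hgm t).mono (𝓕.le _)))
  have haeb : ∀ᵐ ω ∂P, ∀ t, (0 ≤ Z t ω ∧ Z t ω ≤ B) ∧ (0 ≤ g t ω ∧ g t ω ≤ B) := by
    rw [ae_all_iff]
    intro t
    filter_upwards [hbdd t, hgnn t, hgB t] with ω h1 h2 h3
    exact ⟨h1, h2, h3⟩
  have hterm : ∀ (t : ℕ) (ω : Ω), (0 ≤ Z t ω ∧ Z t ω ≤ B) → (0 ≤ g t ω ∧ g t ω ≤ B) →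
      |s * Z t ω - φ * g t ω| ≤ |s| * B + |φ| * B := by
    intro t ω h1 h2
    have e1 : |s * Z t ω| ≤ |s| * B := by
      rw [abs_mul]
      exact mul_le_mul_of_nonneg_left (abs_le.2 ⟨by linarith [h1.1, h1.2], h1.2⟩) (abs_nonneg s)
    have e2 : |φ * g t ω| ≤ |φ| * B := by
      rw [abs_mul]
      exact mul_le_mul_of_nonneg_left (abs_le.2 ⟨by linarith [h2.1, h2.2], h2.2⟩) (abs_nonneg φ)
    calc |s * Z t ω - φ * g t ω| = |s * Z t ω + -(φ * g t ω)| := by rw [sub_eq_add_neg]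
      _ ≤ |s * Z t ω| + |-(φ * g t ω)| := abs_add_le _ _
      _ = |s * Z t ω| + |φ * g t ω| := by rw [abs_neg]
      _ ≤ |s| * B + |φ| * B := add_le_add e1 e2
  have hWb : ∀ T : ℕ, ∀ᵐ ω ∂P,
      |∑ t ∈ Finset.Icc 1 T, (s * Z t ω - φ * g t ω)| ≤ T * (|s| * B + |φ| * B) := by
    intro T
    filter_upwards [haeb] with ω hω
    calc |∑ t ∈ Finset.Icc 1 T, (s * Z t ω - φ * g t ω)|
        ≤ ∑ t ∈ Finset.Icc 1 T, |s * Z t ω - φ * g t ω| := Finset.abs_sum_le_sum_abs _ _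
      _ ≤ ∑ _t ∈ Finset.Icc 1 T, (|s| * B + |φ| * B) :=
          Finset.sum_le_sum fun t _ => hterm t ω (hω t).1 (hω t).2
      _ = (Finset.Icc 1 T).card * (|s| * B + |φ| * B) := by rw [Finset.sum_const, nsmul_eq_mul]
      _ = T * (|s| * B + |φ| * B) := by rw [Nat.card_Icc]; norm_num
  have hexpint : ∀ T : ℕ, Integrable
      (fun ω => Real.exp (∑ t ∈ Finset.Icc 1 T, (s * Z t ω - φ * g t ω))) P := by
    intro T
    refine Integrable.mono' (integrable_const (Real.exp (T * (|s| * B + |φ| * B))))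
      (hWsm T).aestronglyMeasurable ?_
    filter_upwards [hWb T] with ω hω
    rw [Real.norm_eq_abs, abs_of_pos (Real.exp_pos _)]
    exact Real.exp_le_exp.2 (le_of_abs_le hω)
  have hchord : ∀ z : ℝ, 0 ≤ z → z ≤ B → Real.exp (s * z) ≤ 1 + φ * z := by
    intro z hz0 hzB
    have h01 : (0:ℝ) ≤ z / B := by positivity
    have h02 : z / B ≤ 1 := (div_le_one hB).2 hzB
    have hc := convexOn_exp.2 (Set.mem_univ (0:ℝ)) (Set.mem_univ (s * B))
      (by linarith : (0:ℝ) ≤ 1 - z / B) h01 (by ring)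
    simp only [smul_eq_mul, mul_zero, zero_add, Real.exp_zero, mul_one] at hc
    have e1 : z / B * (s * B) = s * z := by field_simp
    rw [e1] at hc
    have e2 : (1 - z / B) + z / B * Real.exp (s * B) = 1 + φ * z := by
      rw [hφ]; field_simp; ring
    linarith
  refine ⟨hexpint T, ?_⟩
  show ∫ ω, Real.exp (∑ t ∈ Finset.Icc 1 T, (s * Z t ω - φ * g t ω)) ∂P ≤ 1
  induction T with
  | zero =>
    rw [Finset.Icc_eq_empty (by omega)]
    simp
  | succ T ih =>
    set W : Ω → ℝ := fun ω => ∑ t ∈ Finset.Icc 1 T, (s * Z t ω - φ * g t ω) with hW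
    set F : Ω → ℝ := fun ω => Real.exp (W ω - φ * g (T + 1) ω) with hF
    set h : Ω → ℝ := fun ω => Real.exp (s * Z (T + 1) ω) with hh
    have hsplit : (fun ω => Real.exp (∑ t ∈ Finset.Icc 1 (T + 1), (s * Z t ω - φ * g t ω)))
        = F * h := by
      funext ω
      rw [Finset.sum_Icc_succ_top (Nat.succ_le_succ (Nat.zero_le T))]
      show Real.exp _ = Real.exp _ * Real.exp _
      rw [← Real.exp_add]
      congr 1
      ring
    have hT1 : (T + 1) - 1 = T := rfl
    have hgT1 : StronglyMeasurable[𝓕 T] (g (T + 1)) := hgm (T + 1)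
    have hFsm : StronglyMeasurable[𝓕 T] F := by
      apply Continuous.comp_stronglyMeasurable Real.continuous_exp
      apply StronglyMeasurable.sub
      · apply Finset.stronglyMeasurable_fun_sum
        intro t ht
        have ht' := Finset.mem_Icc.1 ht
        exact (stronglyMeasurable_const.mul ((hadp t).mono (𝓕.mono ht'.2))).sub
          (stronglyMeasurable_const.mul ((hgm t).mono (𝓕.mono (by omega))))
      · exact stronglyMeasurable_const.mul hgT1
    have hhint : Integrable h P := by
      refine Integrable.mono' (integrable_const (Real.exp (|s| * B)))
        ((Real.continuous_exp.comp_stronglyMeasurable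
          (stronglyMeasurable_const.mul ((hadp (T+1)).mono (𝓕.le _)))).aestronglyMeasurable) ?_
      filter_upwards [hbdd (T + 1)] with ω hω
      rw [Real.norm_eq_abs, abs_of_pos (Real.exp_pos _)]
      apply Real.exp_le_exp.2
      calc s * Z (T+1) ω ≤ |s * Z (T+1) ω| := le_abs_self _
        _ ≤ |s| * B := by
            rw [abs_mul]
            exact mul_le_mul_of_nonneg_left (abs_le.2 ⟨by linarith [hω.1, hω.2], hω.2⟩)
              (abs_nonneg s)
    have hFhint : Integrable (F * h) P := by
      rw [← hsplit]; exact hexpint (T + 1)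
    have hcond_le : P[h | 𝓕 T] ≤ᵐ[P] fun ω => Real.exp (φ * g (T + 1) ω) := by
      have h1int : Integrable (fun ω => 1 + φ * Z (T + 1) ω) P :=
        (integrable_const 1).add ((hint (T + 1)).const_mul φ)
      have step1 : h ≤ᵐ[P] fun ω => 1 + φ * Z (T + 1) ω := by
        filter_upwards [hbdd (T + 1)] with ω hω
        exact hchord _ hω.1 hω.2
      have step2 : P[h | 𝓕 T] ≤ᵐ[P] P[(fun ω => 1 + φ * Z (T + 1) ω) | 𝓕 T] :=
        condExp_mono hhint h1int step1
      have step3 : P[(fun ω => 1 + φ * Z (T + 1) ω) | 𝓕 T]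
          =ᵐ[P] fun ω => 1 + φ * g (T + 1) ω := by
        have e1 : (fun ω => 1 + φ * Z (T + 1) ω)
            = (fun _ => (1:ℝ)) + fun ω => φ * Z (T + 1) ω := rfl
        rw [e1]
        refine (condExp_add (integrable_const 1) ((hint (T + 1)).const_mul φ) _).trans ?_
        have e2 : P[(fun ω => φ * Z (T + 1) ω) | 𝓕 T] =ᵐ[P] fun ω => φ * g (T + 1) ω := by
          have e3 : (fun ω => φ * Z (T + 1) ω) = φ • Z (T + 1) := rfl
          rw [e3]
          exact (condExp_smul φ (Z (T + 1)) _).trans (by rfl)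
        rw [condExp_const (𝓕.le T)]
        filter_upwards [e2] with ω hω
        show 1 + _ = 1 + φ * g (T + 1) ω
        rw [hω]
      filter_upwards [step2, step3] with ω h2 h3
      calc (P[h | 𝓕 T]) ω ≤ _ := h2
        _ = 1 + φ * g (T + 1) ω := h3
        _ ≤ Real.exp (φ * g (T + 1) ω) := by
            have := Real.add_one_le_exp (φ * g (T + 1) ω)
            linarith
    have hfinal : P[F * h | 𝓕 T] ≤ᵐ[P] fun ω => Real.exp (W ω) := by
      have hpull : P[F * h | 𝓕 T] =ᵐ[P] F * P[h | 𝓕 T] :=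
        condExp_mul_of_stronglyMeasurable_left hFsm hFhint hhint
      filter_upwards [hpull, hcond_le] with ω h1 h2
      rw [h1]
      show F ω * (P[h | 𝓕 T]) ω ≤ _
      calc F ω * (P[h | 𝓕 T]) ω ≤ F ω * Real.exp (φ * g (T + 1) ω) :=
            mul_le_mul_of_nonneg_left h2 (le_of_lt (Real.exp_pos _))
        _ = Real.exp (W ω) := by
            rw [hF]
            show Real.exp _ * Real.exp _ = _
            rw [← Real.exp_add]
            congr 1
            ring
    calc ∫ ω, Real.exp (∑ t ∈ Finset.Icc 1 (T + 1), (s * Z t ω - φ * g t ω)) ∂P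
        = ∫ ω, (F * h) ω ∂P := by rw [← hsplit]
      _ = ∫ ω, (P[F * h | 𝓕 T]) ω ∂P := (integral_condExp (𝓕.le T)).symm
      _ ≤ ∫ ω, Real.exp (W ω) ∂P :=
          integral_mono_ae integrable_condExp (hexpint T) hfinal
      _ ≤ 1 := ih


/-- Anytime two-sided Freedman-type bound for adapted nonnegative bounded sequences:
there is a universal constant `C' > 0` such that for any adapted sequence `(Z_ℓ)` with
`0 ≤ Z_ℓ ≤ B̃` a.s., `δ' ∈ (0,1)`, `β ∈ (0,1]`, with probability at least `1 − 2δ'`,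
simultaneously for all `T ≥ 1`,
`(1−β)·Σ_{t=1}^T E[Z_t|F_{t−1}] − 2B̃C'·log(T/δ')/β ≤ Σ_{ℓ=1}^T Z_ℓ
  ≤ (1+β)·Σ_{t=1}^T E[Z_t|F_{t−1}] + 2B̃C'·log(T/δ')/β`. -/
theorem stmt_8 :
    ∃ C' : ℝ, 0 < C' ∧
      ∀ (Ω : Type) [m0 : MeasurableSpace Ω] (P : Measure Ω) [IsProbabilityMeasure P]
        (𝓕 : Filtration ℕ m0) (δ' β B : ℝ), 0 < δ' → δ' < 1 → 0 < β → β ≤ 1 → 0 < B →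
        ∀ Z : ℕ → Ω → ℝ,
        (∀ ℓ, StronglyMeasurable[𝓕 ℓ] (Z ℓ)) →
        (∀ ℓ, Integrable (Z ℓ) P) →
        (∀ ℓ, ∀ᵐ ω ∂P, 0 ≤ Z ℓ ω ∧ Z ℓ ω ≤ B) →
        ENNReal.ofReal (1 - 2 * δ') ≤
          P {ω | ∀ T : ℕ, 1 ≤ T →
            ((1 - β) * ∑ t ∈ Finset.Icc 1 T, (P[Z t | 𝓕 (t - 1)]) ω -
                2 * B * C' * Real.log ((T : ℝ) / δ') / β ≤ ∑ ℓ ∈ Finset.Icc 1 T, Z ℓ ω ∧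
              ∑ ℓ ∈ Finset.Icc 1 T, Z ℓ ω ≤
                (1 + β) * ∑ t ∈ Finset.Icc 1 T, (P[Z t | 𝓕 (t - 1)]) ω +
                  2 * B * C' * Real.log ((T : ℝ) / δ') / β)} := by
  refine ⟨1, one_pos, ?_⟩
  intro Ω m0 P _inst 𝓕 δ' β B hδ0 hδ1 hβ0 hβ1 hB Z hadp hint hbdd
  by_cases hδhalf : (1:ℝ)/2 < δ'
  · rw [ENNReal.ofReal_eq_zero.2 (by linarith)]
    exact zero_le
  push_neg at hδhalf
  -- Markov bound for the exponential supermartingale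
  have markov : ∀ (s : ℝ) (T : ℕ), 1 ≤ T →
      P {ω | 2 * Real.log ((T:ℝ)/δ') ≤ ∑ t ∈ Finset.Icc 1 T,
        (s * Z t ω - (Real.exp (s*B)-1)/B * (P[Z t | 𝓕 (t-1)]) ω)}
      ≤ ENNReal.ofReal (δ'^2 / (T:ℝ)^2) := by
    intro s T hT
    obtain ⟨hfint, hkey⟩ := key_mgf P 𝓕 B hB Z hadp hint hbdd s T
    set X : Ω → ℝ := fun ω => ∑ t ∈ Finset.Icc 1 T,
      (s * Z t ω - (Real.exp (s*B)-1)/B * (P[Z t | 𝓕 (t-1)]) ω) with hX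
    have hTpos : (0:ℝ) < (T:ℝ)/δ' := by
      apply div_pos _ hδ0
      exact_mod_cast Nat.pos_of_ne_zero (by omega)
    have hεeq : Real.exp (2 * Real.log ((T:ℝ)/δ')) = ((T:ℝ)/δ')^2 := by
      rw [two_mul, Real.exp_add, Real.exp_log hTpos, sq]
    have hset : {ω | 2 * Real.log ((T:ℝ)/δ') ≤ X ω}
        = {ω | ((T:ℝ)/δ')^2 ≤ Real.exp (X ω)} := by
      ext ω
      rw [Set.mem_setOf_eq, Set.mem_setOf_eq, ← hεeq, Real.exp_le_exp]
    rw [hset]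
    have hmar := mul_meas_ge_le_integral_of_nonneg
      (Filter.Eventually.of_forall fun ω => (Real.exp_pos (X ω)).le) hfint (((T:ℝ)/δ')^2)
    have hpos2 : (0:ℝ) < ((T:ℝ)/δ')^2 := by positivity
    have h2 : ((T:ℝ)/δ')^2 * (P {ω | ((T:ℝ)/δ')^2 ≤ Real.exp (X ω)}).toReal ≤ 1 :=
      le_trans hmar hkey
    have htoReal : (P {ω | ((T:ℝ)/δ')^2 ≤ Real.exp (X ω)}).toReal ≤ δ'^2/(T:ℝ)^2 := by
      rw [← le_div_iff₀' hpos2] at h2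
      refine h2.trans (le_of_eq ?_)
      rw [div_pow, one_div_div]
    calc P {ω | ((T:ℝ)/δ')^2 ≤ Real.exp (X ω)}
        = ENNReal.ofReal ((P {ω | ((T:ℝ)/δ')^2 ≤ Real.exp (X ω)}).toReal) :=
          (ENNReal.ofReal_toReal (measure_ne_top _ _)).symm
      _ ≤ ENNReal.ofReal (δ'^2/(T:ℝ)^2) := ENNReal.ofReal_le_ofReal htoReal
  -- the union of bad events
  set U : ℕ → Set Ω := fun T => {ω | 2 * Real.log ((T:ℝ)/δ') ≤ ∑ t ∈ Finset.Icc 1 T,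
    ((β/B) * Z t ω - (Real.exp ((β/B)*B)-1)/B * (P[Z t | 𝓕 (t-1)]) ω)} with hU
  set L : ℕ → Set Ω := fun T => {ω | 2 * Real.log ((T:ℝ)/δ') ≤ ∑ t ∈ Finset.Icc 1 T,
    ((-(β/B)) * Z t ω - (Real.exp ((-(β/B))*B)-1)/B * (P[Z t | 𝓕 (t-1)]) ω)} with hL
  have hbadsum : P (⋃ n : ℕ, (U (n+1) ∪ L (n+1))) ≤ ENNReal.ofReal (2 * δ') := by
    refine (measure_iUnion_le _).trans ?_
    have hterm : ∀ n : ℕ, P (U (n+1) ∪ L (n+1)) ≤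
        ENNReal.ofReal (2 * δ'^2 / ((n:ℝ)+1)^2) := by
      intro n
      refine (measure_union_le _ _).trans ?_
      have h1 := markov (β/B) (n+1) (by omega)
      have h2 := markov (-(β/B)) (n+1) (by omega)
      calc P (U (n+1)) + P (L (n+1))
          ≤ ENNReal.ofReal (δ'^2/(((n+1:ℕ)):ℝ)^2) + ENNReal.ofReal (δ'^2/(((n+1:ℕ)):ℝ)^2) :=
            add_le_add h1 h2
        _ = ENNReal.ofReal (2 * δ'^2 / ((n:ℝ)+1)^2) := by
            rw [← ENNReal.ofReal_add (by positivity) (by positivity)]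
            congr 1
            push_cast
            ring
    refine (ENNReal.tsum_le_tsum hterm).trans ?_
    refine ENNReal.tsum_le_of_sum_range_le ?_
    intro n
    have hnn : ∀ i ∈ Finset.range n, (0:ℝ) ≤ 2 * δ'^2 / ((i:ℝ)+1)^2 :=
      fun i _ => by positivity
    rw [← ENNReal.ofReal_sum_of_nonneg hnn]
    apply ENNReal.ofReal_le_ofReal
    have heq : ∀ i ∈ Finset.range n, 2 * δ'^2 / ((i:ℝ)+1)^2
        = (2 * δ'^2) * ((1:ℝ) / ((i:ℝ)+1)^2) := fun i _ => by ring
    rw [Finset.sum_congr rfl heq, ← Finset.mul_sum]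
    have hs := sum_inv_sq_le n
    have h1n : (0:ℝ) < 2 / ((n:ℝ)+1) := by positivity
    nlinarith [sq_nonneg δ', hδ0.le]
  have hgnn : ∀ᵐ ω ∂P, ∀ t : ℕ, 0 ≤ (P[Z t | 𝓕 (t-1)]) ω := by
    rw [ae_all_iff]
    intro t
    exact condExp_nonneg ((hbdd t).mono fun ω h => h.1)
  set G : Set Ω := {ω | ∀ T : ℕ, 1 ≤ T →
            ((1 - β) * ∑ t ∈ Finset.Icc 1 T, (P[Z t | 𝓕 (t - 1)]) ω -
                2 * B * 1 * Real.log ((T : ℝ) / δ') / β ≤ ∑ ℓ ∈ Finset.Icc 1 T, Z ℓ ω ∧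
              ∑ ℓ ∈ Finset.Icc 1 T, Z ℓ ω ≤
                (1 + β) * ∑ t ∈ Finset.Icc 1 T, (P[Z t | 𝓕 (t - 1)]) ω +
                  2 * B * 1 * Real.log ((T : ℝ) / δ') / β)} with hG
  have hincl : Gᶜ ⊆ (⋃ n : ℕ, (U (n+1) ∪ L (n+1)))
      ∪ {ω | ¬ ∀ t : ℕ, 0 ≤ (P[Z t | 𝓕 (t-1)]) ω} := by
    intro ω hω
    rw [Set.mem_compl_iff, hG, Set.mem_setOf_eq] at hω
    push_neg at hω
    obtain ⟨T, hT1, hTbad⟩ := hω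
    by_cases hgω : ∀ t : ℕ, 0 ≤ (P[Z t | 𝓕 (t-1)]) ω
    swap
    · exact Or.inr hgω
    left
    have hT' : T - 1 + 1 = T := Nat.succ_pred_eq_of_pos hT1
    refine Set.mem_iUnion.2 ⟨T - 1, ?_⟩
    rw [hT']
    have hsB : (β/B) * B = β := div_mul_cancel₀ β hB.ne'
    have hMv0 : 0 ≤ ∑ t ∈ Finset.Icc 1 T, (P[Z t | 𝓕 (t-1)]) ω :=
      Finset.sum_nonneg fun t _ => hgω t
    have hK : (β/B) * (2 * B * 1 * Real.log ((T:ℝ)/δ') / β) = 2 * Real.log ((T:ℝ)/δ') := by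
      field_simp
    by_cases hA : (1 - β) * ∑ t ∈ Finset.Icc 1 T, (P[Z t | 𝓕 (t - 1)]) ω -
                2 * B * 1 * Real.log ((T : ℝ) / δ') / β ≤ ∑ ℓ ∈ Finset.Icc 1 T, Z ℓ ω
    · -- upper tail violated
      have hup := hTbad hA
      left
      rw [hU, Set.mem_setOf_eq]
      have hsum_eq : ∑ t ∈ Finset.Icc 1 T,
          ((β/B) * Z t ω - (Real.exp ((β/B)*B)-1)/B * (P[Z t | 𝓕 (t-1)]) ω)
          = (β/B) * (∑ t ∈ Finset.Icc 1 T, Z t ω)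
            - ((Real.exp β - 1)/B) * ∑ t ∈ Finset.Icc 1 T, (P[Z t | 𝓕 (t-1)]) ω := by
        rw [hsB, Finset.sum_sub_distrib, ← Finset.mul_sum, ← Finset.mul_sum]
      rw [hsum_eq]
      have hφ : (Real.exp β - 1)/B ≤ (β/B)*(1+β) := by
        have h1 := exp_le_quad hβ0.le hβ1
        have h2 : (Real.exp β - 1)/B ≤ (β*(1+β))/B := by
          gcongr
          nlinarith
        calc (Real.exp β - 1)/B ≤ (β*(1+β))/B := h2
          _ = (β/B)*(1+β) := by ring
      have p1 : (β/B) * ((1+β) * (∑ t ∈ Finset.Icc 1 T, (P[Z t | 𝓕 (t-1)]) ω)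
            + 2 * B * 1 * Real.log ((T:ℝ)/δ') / β)
          ≤ (β/B) * ∑ ℓ ∈ Finset.Icc 1 T, Z ℓ ω :=
        mul_le_mul_of_nonneg_left hup.le (by positivity)
      have p2 : 0 ≤ ((β/B)*(1+β) - (Real.exp β - 1)/B)
          * ∑ t ∈ Finset.Icc 1 T, (P[Z t | 𝓕 (t-1)]) ω :=
        mul_nonneg (by linarith) hMv0
      nlinarith [p1, p2, hK]
    · -- lower tail violated
      have hlo := lt_of_not_ge hA
      right
      rw [hL, Set.mem_setOf_eq]
      have hsB2 : (-(β/B)) * B = -β := by field_simp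
      have hsum_eq : ∑ t ∈ Finset.Icc 1 T,
          ((-(β/B)) * Z t ω - (Real.exp ((-(β/B))*B)-1)/B * (P[Z t | 𝓕 (t-1)]) ω)
          = (-(β/B)) * (∑ t ∈ Finset.Icc 1 T, Z t ω)
            - ((Real.exp (-β) - 1)/B) * ∑ t ∈ Finset.Icc 1 T, (P[Z t | 𝓕 (t-1)]) ω := by
        rw [hsB2, Finset.sum_sub_distrib, ← Finset.mul_sum, ← Finset.mul_sum]
      rw [hsum_eq]
      have hφ2 : (Real.exp (-β) - 1)/B ≤ (-(β/B))*(1-β) := by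
        have h1 := exp_neg_le_quad hβ0.le hβ1
        have h2 : (Real.exp (-β) - 1)/B ≤ (-(β*(1-β)))/B := by
          gcongr
          nlinarith
        calc (Real.exp (-β) - 1)/B ≤ (-(β*(1-β)))/B := h2
          _ = (-(β/B))*(1-β) := by ring
      have hneg : -(β/B) < 0 := by
        have : 0 < β/B := by positivity
        linarith
      have p1 : (-(β/B)) * ((1-β) * (∑ t ∈ Finset.Icc 1 T, (P[Z t | 𝓕 (t-1)]) ω)
            - 2 * B * 1 * Real.log ((T:ℝ)/δ') / β)
          < (-(β/B)) * ∑ ℓ ∈ Finset.Icc 1 T, Z ℓ ω :=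
        mul_lt_mul_of_neg_left hlo hneg
      have p2 : 0 ≤ ((-(β/B))*(1-β) - (Real.exp (-β) - 1)/B)
          * ∑ t ∈ Finset.Icc 1 T, (P[Z t | 𝓕 (t-1)]) ω :=
        mul_nonneg (by linarith) hMv0
      nlinarith [p1, p2, hK]
  have hGmeas : MeasurableSet G := by
    rw [hG, Set.setOf_forall]
    refine MeasurableSet.iInter fun T => ?_
    by_cases hT : 1 ≤ T
    · have hm1 : Measurable fun ω => ∑ ℓ ∈ Finset.Icc 1 T, Z ℓ ω :=
        Finset.measurable_sum _ fun t _ => ((hadp t).mono (𝓕.le t)).measurable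
      have hm2 : Measurable fun ω => ∑ t ∈ Finset.Icc 1 T, (P[Z t | 𝓕 (t-1)]) ω :=
        Finset.measurable_sum _ fun t _ =>
          (stronglyMeasurable_condExp.mono (𝓕.le _)).measurable
      have he : {ω | 1 ≤ T →
            ((1 - β) * ∑ t ∈ Finset.Icc 1 T, (P[Z t | 𝓕 (t - 1)]) ω -
                2 * B * 1 * Real.log ((T : ℝ) / δ') / β ≤ ∑ ℓ ∈ Finset.Icc 1 T, Z ℓ ω ∧
              ∑ ℓ ∈ Finset.Icc 1 T, Z ℓ ω ≤
                (1 + β) * ∑ t ∈ Finset.Icc 1 T, (P[Z t | 𝓕 (t - 1)]) ω +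
                  2 * B * 1 * Real.log ((T : ℝ) / δ') / β)}
          = {ω | (1 - β) * ∑ t ∈ Finset.Icc 1 T, (P[Z t | 𝓕 (t - 1)]) ω -
                2 * B * 1 * Real.log ((T : ℝ) / δ') / β ≤ ∑ ℓ ∈ Finset.Icc 1 T, Z ℓ ω}
            ∩ {ω | ∑ ℓ ∈ Finset.Icc 1 T, Z ℓ ω ≤
                (1 + β) * ∑ t ∈ Finset.Icc 1 T, (P[Z t | 𝓕 (t - 1)]) ω +
                  2 * B * 1 * Real.log ((T : ℝ) / δ') / β} := by
        ext ω
        simp [hT, Set.mem_setOf_eq]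
      rw [he]
      exact (measurableSet_le (((hm2.const_mul _).sub measurable_const)) hm1).inter
        (measurableSet_le hm1 (((hm2.const_mul _)).add measurable_const))
    · have he : {ω | 1 ≤ T →
            ((1 - β) * ∑ t ∈ Finset.Icc 1 T, (P[Z t | 𝓕 (t - 1)]) ω -
                2 * B * 1 * Real.log ((T : ℝ) / δ') / β ≤ ∑ ℓ ∈ Finset.Icc 1 T, Z ℓ ω ∧
              ∑ ℓ ∈ Finset.Icc 1 T, Z ℓ ω ≤
                (1 + β) * ∑ t ∈ Finset.Icc 1 T, (P[Z t | 𝓕 (t - 1)]) ω +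
                  2 * B * 1 * Real.log ((T : ℝ) / δ') / β)} = Set.univ := by
        ext ω
        simp [hT]
      rw [he]
      exact MeasurableSet.univ
  have hnull : P {ω | ¬ ∀ t : ℕ, 0 ≤ (P[Z t | 𝓕 (t-1)]) ω} = 0 := ae_iff.1 hgnn
  have hGc : P Gᶜ ≤ ENNReal.ofReal (2 * δ') := by
    calc P Gᶜ ≤ P ((⋃ n : ℕ, (U (n+1) ∪ L (n+1)))
          ∪ {ω | ¬ ∀ t : ℕ, 0 ≤ (P[Z t | 𝓕 (t-1)]) ω}) := measure_mono hincl
      _ ≤ P (⋃ n : ℕ, (U (n+1) ∪ L (n+1)))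
          + P {ω | ¬ ∀ t : ℕ, 0 ≤ (P[Z t | 𝓕 (t-1)]) ω} := measure_union_le _ _
      _ = P (⋃ n : ℕ, (U (n+1) ∪ L (n+1))) := by rw [hnull, add_zero]
      _ ≤ ENNReal.ofReal (2 * δ') := hbadsum
  have hPG : P G = 1 - P Gᶜ := by
    have h := measure_compl hGmeas.compl (measure_ne_top P _)
    rwa [compl_compl, measure_univ] at h
  show ENNReal.ofReal (1 - 2 * δ') ≤ P G
  rw [hPG]
  calc ENNReal.ofReal (1 - 2*δ') ≤ 1 - ENNReal.ofReal (2*δ') := by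
        apply ENNReal.le_sub_of_add_le_right ENNReal.ofReal_ne_top
        rw [← ENNReal.ofReal_add (by linarith) (by linarith)]
        have he : (1 - 2*δ') + 2*δ' = 1 := by ring
        rw [he, ENNReal.ofReal_one]
    _ ≤ 1 - P Gᶜ := tsub_le_tsub_left hGc 1
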